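/- For ξ = (x, y) ∈ se(3) represented as the 4×4 matrix ξ̂ = [[x̃, y],[0,0]], the matrix exponential satisfies exp(ξ̂) = [[exp(x̃), dexp_x · y],[0, 1]], where dexp_x = I + (β/2)x̃ + ((1−α)/‖x‖²)x̃² with α = sinc‖x‖, β = sinc²(‖x‖/2). -/

import Mathlib

open Matrix

/-- The skew-symmetric matrix `x̃` associated with `x ∈ ℝ³`. -/
def skew (x : Fin 3 → ℝ) : Matrix (Fin 3) (Fin 3) ℝ :=
  !![0, -x 2, x 1; x 2, 0, -x 0; -x 1, x 0, 0]

/-- `sinc x = sin x / x` for `x ≠ 0`, and `sinc 0 = 1`. -/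
noncomputable def sinc (x : ℝ) : ℝ := if x = 0 then 1 else Real.sin x / x

/-- The matrix `[[x̃, y],[0,0]]` representing `ξ = (x, y) ∈ se(3)`. -/
def se3Hat (x y : Fin 3 → ℝ) : Matrix (Fin 3 ⊕ Fin 1) (Fin 3 ⊕ Fin 1) ℝ :=
  Matrix.fromBlocks (skew x) (Matrix.of fun i (_ : Fin 1) => y i) 0 0

section Aux

open NormedSpace

attribute [local instance] Matrix.linftyOpNormedRing Matrix.linftyOpNormedAlgebra
  Matrix.linftyOpNormedAddCommGroup

variable {N : Type*} [Fintype N] [DecidableEq N]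

lemma pow_even_of_quartic (M : Matrix N N ℝ) (φ : ℝ) (h : M ^ 4 = (-φ ^ 2) • M ^ 2) (k : ℕ) :
    M ^ (2 * k + 2) = ((-φ ^ 2) ^ k) • M ^ 2 := by
  induction k with
  | zero => simp
  | succ k ih =>
    have h1 : 2 * (k + 1) + 2 = (2 * k + 2) + 2 := by ring
    rw [h1, pow_add, ih, smul_mul_assoc, ← pow_add, h, smul_smul, ← pow_succ]

lemma pow_odd_of_quartic (M : Matrix N N ℝ) (φ : ℝ) (h : M ^ 4 = (-φ ^ 2) • M ^ 2) (k : ℕ) :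
    M ^ (2 * k + 3) = ((-φ ^ 2) ^ k) • M ^ 3 := by
  have h1 : 2 * k + 3 = (2 * k + 2) + 1 := by ring
  rw [h1, pow_add, pow_even_of_quartic M φ h k, smul_mul_assoc, ← pow_add]

lemma hasSum_c2 (φ : ℝ) (hφ : φ ≠ 0) :
    HasSum (fun k : ℕ => ((Nat.factorial (2 * k + 2) : ℝ))⁻¹ * (-φ ^ 2) ^ k) ((1 - Real.cos φ) / φ ^ 2) := by
  have h := ((hasSum_nat_add_iff' (f := fun n : ℕ => (-1 : ℝ) ^ n * φ ^ (2 * n) / (Nat.factorial (2 * n))) 1).2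
    (Real.hasSum_cos φ)).mul_right (-(1 / φ ^ 2))
  have e2 : (Real.cos φ - ∑ i ∈ Finset.range 1,
      (-1 : ℝ) ^ i * φ ^ (2 * i) / (Nat.factorial (2 * i))) * (-(1 / φ ^ 2)) = (1 - Real.cos φ) / φ ^ 2 := by
    norm_num
    field_simp
    ring
  rw [e2] at h
  refine h.congr_fun fun k => ?_
  have h2 : 2 * (k + 1) = 2 * k + 2 := by ring
  have hne : ((Nat.factorial (2 * k + 2) : ℝ)) ≠ 0 := Nat.cast_ne_zero.2 (Nat.factorial_ne_zero _)
  rw [h2, neg_pow, ← pow_mul]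
  field_simp
  ring

lemma hasSum_c3 (φ : ℝ) (hφ : φ ≠ 0) :
    HasSum (fun k : ℕ => ((Nat.factorial (2 * k + 3) : ℝ))⁻¹ * (-φ ^ 2) ^ k) ((φ - Real.sin φ) / φ ^ 3) := by
  have h := ((hasSum_nat_add_iff'
      (f := fun n : ℕ => (-1 : ℝ) ^ n * φ ^ (2 * n + 1) / (Nat.factorial (2 * n + 1))) 1).2
    (Real.hasSum_sin φ)).mul_right (-(1 / φ ^ 3))
  have e2 : (Real.sin φ - ∑ i ∈ Finset.range 1,
      (-1 : ℝ) ^ i * φ ^ (2 * i + 1) / (Nat.factorial (2 * i + 1))) * (-(1 / φ ^ 3))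
      = (φ - Real.sin φ) / φ ^ 3 := by
    norm_num
    field_simp
    ring
  rw [e2] at h
  refine h.congr_fun fun k => ?_
  have h2 : 2 * (k + 1) + 1 = 2 * k + 3 := by ring
  have hne : ((Nat.factorial (2 * k + 3) : ℝ)) ≠ 0 := Nat.cast_ne_zero.2 (Nat.factorial_ne_zero _)
  rw [h2, neg_pow, ← pow_mul]
  field_simp
  ring

lemma exp_cubic (M : Matrix N N ℝ) (φ : ℝ) (hφ : φ ≠ 0) (h4 : M ^ 4 = (-φ ^ 2) • M ^ 2) :
    exp M = 1 + M + ((1 - Real.cos φ) / φ ^ 2) • M ^ 2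
      + ((φ - Real.sin φ) / φ ^ 3) • M ^ 3 := by
  have hf : Summable (fun n : ℕ => (Nat.factorial n : ℝ)⁻¹ • M ^ n) := expSeries_summable' M
  have hc2 := hasSum_c2 φ hφ
  have hc3 := hasSum_c3 φ hφ
  have heven : ∀ k : ℕ, ((Nat.factorial (2 * k + 2) : ℝ))⁻¹ • M ^ (2 * k + 2)
      = (((Nat.factorial (2 * k + 2) : ℝ))⁻¹ * (-φ ^ 2) ^ k) • M ^ 2 := fun k => by
    rw [pow_even_of_quartic M φ h4 k, smul_smul]
  have hodd : ∀ k : ℕ, ((Nat.factorial (2 * k + 3) : ℝ))⁻¹ • M ^ (2 * k + 3)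
      = (((Nat.factorial (2 * k + 3) : ℝ))⁻¹ * (-φ ^ 2) ^ k) • M ^ 3 := fun k => by
    rw [pow_odd_of_quartic M φ h4 k, smul_smul]
  have hse : Summable (fun k : ℕ => ((Nat.factorial (2 * k + 2) : ℝ))⁻¹ • M ^ (2 * k + 2)) := by
    refine ((hc2.summable.smul_const (M ^ 2)).congr fun k => ?_)
    rw [heven k]
  have hso : Summable (fun k : ℕ => ((Nat.factorial (2 * k + 3) : ℝ))⁻¹ • M ^ (2 * k + 3)) := by
    refine ((hc3.summable.smul_const (M ^ 3)).congr fun k => ?_)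
    rw [hodd k]
  have hso' : Summable (fun k : ℕ => ((Nat.factorial (2 * k + 1 + 2) : ℝ))⁻¹ • M ^ (2 * k + 1 + 2)) := by
    simp only [show ∀ k : ℕ, 2 * k + 1 + 2 = 2 * k + 3 from fun k => by omega]
    exact hso
  rw [congrFun (exp_eq_tsum (𝕂 := ℝ) (𝔸 := Matrix N N ℝ)) M]
  rw [← Summable.sum_add_tsum_nat_add 2 hf]
  have hsplit : (∑' m : ℕ, (Nat.factorial (m + 2) : ℝ)⁻¹ • M ^ (m + 2))
      = (∑' k : ℕ, ((Nat.factorial (2 * k + 2) : ℝ))⁻¹ • M ^ (2 * k + 2))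
        + ∑' k : ℕ, ((Nat.factorial (2 * k + 3) : ℝ))⁻¹ • M ^ (2 * k + 3) := by
    rw [← tsum_even_add_odd (f := fun m : ℕ => (Nat.factorial (m + 2) : ℝ)⁻¹ • M ^ (m + 2))
      hse hso']
  rw [hsplit]
  have he : (∑' k : ℕ, ((Nat.factorial (2 * k + 2) : ℝ))⁻¹ • M ^ (2 * k + 2))
      = ((1 - Real.cos φ) / φ ^ 2) • M ^ 2 := by
    rw [tsum_congr heven, Summable.tsum_smul_const hc2.summable, hc2.tsum_eq]
  have ho : (∑' k : ℕ, ((Nat.factorial (2 * k + 3) : ℝ))⁻¹ • M ^ (2 * k + 3))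
      = ((φ - Real.sin φ) / φ ^ 3) • M ^ 3 := by
    rw [tsum_congr hodd, Summable.tsum_smul_const hc3.summable, hc3.tsum_eq]
  rw [he, ho]
  rw [Finset.sum_range_succ, Finset.sum_range_one]
  simp only [pow_zero, Nat.factorial_zero, Nat.cast_one, inv_one, one_smul, pow_one,
    Nat.factorial_one]
  abel

lemma exp_sq_zero (M : Matrix N N ℝ) (h : M ^ 2 = 0) : exp M = 1 + M := by
  have hf : Summable (fun n : ℕ => (Nat.factorial n : ℝ)⁻¹ • M ^ n) := expSeries_summable' M
  rw [congrFun (exp_eq_tsum (𝕂 := ℝ) (𝔸 := Matrix N N ℝ)) M]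
  rw [← Summable.sum_add_tsum_nat_add 2 hf]
  have hz : ∀ m : ℕ, (Nat.factorial (m + 2) : ℝ)⁻¹ • M ^ (m + 2) = 0 := by
    intro m
    rw [show m + 2 = 2 + m from by omega, pow_add, h, zero_mul, smul_zero]
  rw [tsum_congr hz]
  rw [Finset.sum_range_succ, Finset.sum_range_one]
  norm_num

end Aux

/-- Closed form of the matrix exponential on `SE(3)`:
`exp [[x̃,y],[0,0]] = [[exp x̃, dexp_x · y],[0,1]]`, where
`dexp_x = I + (β/2)x̃ + ((1−α)/‖x‖²)x̃²`, `α = sinc ‖x‖`, `β = sinc²(‖x‖/2)`. -/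
theorem stmt8 (x y : Fin 3 → ℝ) (φ α β : ℝ)
    (hφ : φ = Real.sqrt (x 0 ^ 2 + x 1 ^ 2 + x 2 ^ 2))
    (hα : α = sinc φ) (hβ : β = sinc (φ / 2) ^ 2)
    (dexpx : Matrix (Fin 3) (Fin 3) ℝ)
    (hdexp : dexpx = 1 + (β / 2) • skew x + ((1 - α) / φ ^ 2) • (skew x) ^ 2) :
    NormedSpace.exp (se3Hat x y) =
      Matrix.fromBlocks (NormedSpace.exp (skew x))
        (Matrix.of fun i (_ : Fin 1) => (dexpx *ᵥ y) i) 0 1 := by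
  set A := skew x with hA
  set b' : Matrix (Fin 3) (Fin 1) ℝ := Matrix.of fun i (_ : Fin 1) => y i with hb'
  have hb : (Matrix.of fun i (_ : Fin 1) => (dexpx *ᵥ y) i) = dexpx * b' := by
    ext i j
    simp [Matrix.mul_apply, Matrix.mulVec, dotProduct, hb']
  have hsq : φ ^ 2 = x 0 ^ 2 + x 1 ^ 2 + x 2 ^ 2 := by
    rw [hφ, Real.sq_sqrt (by positivity)]
  have hA3 : A ^ 3 = (-φ ^ 2) • A := by
    ext i j
    fin_cases i <;> fin_cases j <;>
      simp [hA, skew, pow_succ, Matrix.mul_apply, Fin.sum_univ_three, hsq] <;> ring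
  have hA4 : A ^ 4 = (-φ ^ 2) • A ^ 2 := by
    rw [show A ^ 4 = A ^ 3 * A from pow_succ _ 3, hA3, smul_mul_assoc, ← pow_two]
  by_cases h0 : φ = 0
  · have hx : x 0 = 0 ∧ x 1 = 0 ∧ x 2 = 0 := by
      rw [h0] at hsq
      norm_num at hsq
      refine ⟨by nlinarith, by nlinarith, by nlinarith⟩
    have hA0 : A = 0 := by
      ext i j
      fin_cases i <;> fin_cases j <;>
        simp [hA, skew, hx.1, hx.2.1, hx.2.2, Matrix.vecHead, Matrix.vecTail]
    have hd1 : dexpx = 1 := by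
      rw [hdexp, hA0, hα, h0]
      simp [sinc]
    have hN : se3Hat x y = Matrix.fromBlocks 0 b' 0 0 := by
      rw [se3Hat, ← hA, ← hb', hA0]
    have hN2 : (se3Hat x y) ^ 2 = 0 := by
      rw [pow_two, hN, Matrix.fromBlocks_multiply]
      simp
    rw [exp_sq_zero _ hN2, hN, hb, hd1, hA0, NormedSpace.exp_zero, Matrix.one_mul]
    rw [← Matrix.fromBlocks_one, Matrix.fromBlocks_add]
    simp
  · have hΞ2 : (se3Hat x y) ^ 2 = Matrix.fromBlocks (A ^ 2) (A * b') 0 0 := by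
      rw [pow_two, se3Hat, ← hA, ← hb', Matrix.fromBlocks_multiply]
      simp [pow_two]
    have hΞ3 : (se3Hat x y) ^ 3 = Matrix.fromBlocks (A ^ 3) (A ^ 2 * b') 0 0 := by
      rw [show se3Hat x y ^ 3 = se3Hat x y ^ 2 * se3Hat x y from pow_succ _ 2, hΞ2, se3Hat,
        ← hA, ← hb', Matrix.fromBlocks_multiply]
      simp [pow_succ]
    have hΞ4 : (se3Hat x y) ^ 4 = (-φ ^ 2) • (se3Hat x y) ^ 2 := by
      have e : se3Hat x y ^ 2 * se3Hat x y ^ 2 = se3Hat x y ^ 4 := by rw [← pow_add]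
      rw [← e, hΞ2, Matrix.fromBlocks_multiply, Matrix.fromBlocks_smul]
      refine Matrix.fromBlocks_inj.mpr ⟨?_, ?_, by simp, by simp⟩
      · rw [Matrix.mul_zero, add_zero]
        have e2 : A ^ 2 * A ^ 2 = A ^ 4 := by rw [← pow_add]
        rw [e2, hA4]
      · rw [Matrix.mul_zero, add_zero]
        have e3 : A ^ 2 * (A * b') = A ^ 3 * b' := by
          rw [← Matrix.mul_assoc, ← pow_succ]
        rw [e3, hA3, Matrix.smul_mul]
    have hc2' : β / 2 = (1 - Real.cos φ) / φ ^ 2 := by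
      have hs : Real.sin (φ / 2) ^ 2 = (1 - Real.cos φ) / 2 := by
        have h1 := Real.cos_sq (φ / 2)
        have h2 : 2 * (φ / 2) = φ := by ring
        rw [h2] at h1
        rw [Real.sin_sq, h1]
        ring
      rw [hβ, sinc, if_neg (div_ne_zero h0 two_ne_zero), div_pow, hs]
      field_simp
    have hc3' : (1 - α) / φ ^ 2 = (φ - Real.sin φ) / φ ^ 3 := by
      rw [hα, sinc, if_neg h0]
      have e : (1 - Real.sin φ / φ) = (φ - Real.sin φ) / φ := by field_simp
      rw [e, div_div, ← pow_succ']
    rw [exp_cubic _ φ h0 hΞ4, exp_cubic A φ h0 hA4, hΞ2, hΞ3, hb, hdexp, hc2', hc3']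
    have h1 : se3Hat x y = Matrix.fromBlocks A b' 0 0 := by rw [se3Hat, ← hA, ← hb']
    rw [h1, show (1 : Matrix (Fin 3 ⊕ Fin 1) (Fin 3 ⊕ Fin 1) ℝ) = Matrix.fromBlocks 1 0 0 1
        from Matrix.fromBlocks_one.symm,
      Matrix.fromBlocks_smul, Matrix.fromBlocks_smul,
      Matrix.fromBlocks_add, Matrix.fromBlocks_add, Matrix.fromBlocks_add]
    refine Matrix.fromBlocks_inj.mpr ⟨rfl, ?_, by simp, by simp⟩
    simp [Matrix.add_mul, Matrix.smul_mul]
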